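/- If two nilpotent Jordan normal bases of the same finite-dimensional vector space V with respect to the same nilpotent endomorphism φ have block-size multisets {k_γ} and {l_δ}, then these multisets are equal (the block sizes are unique up to permutation). -/

import Mathlib

open Module LinearMap Submodule

lemma aux_sum_sub (n : ℕ) (s : Multiset ℕ) :
    (s.map (· - n)).sum = (s.map (· - (n+1))).sum + Multiset.card (s.filter (n < ·)) := by
  induction s using Multiset.induction with
  | empty => simp
  | cons a s ih =>
    by_cases h : n < a <;> simp [Multiset.filter_cons, h, ih] <;> omega

lemma aux_card_filter_succ (n : ℕ) (s : Multiset ℕ) :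
    Multiset.card (s.filter (n < ·)) =
      Multiset.card (s.filter (n+1 < ·)) + s.count (n+1) := by
  induction s using Multiset.induction with
  | empty => simp
  | cons a s ih =>
    by_cases h1 : n < a <;> by_cases h2 : n+1 < a <;> by_cases h3 : n+1 = a <;>
      simp [Multiset.filter_cons, Multiset.count_cons, h1, h2, h3, ih] <;> omega

lemma aux_ms (s t : Multiset ℕ) (hs : ∀ a ∈ s, 1 ≤ a) (ht : ∀ a ∈ t, 1 ≤ a)
    (h : ∀ n, (s.map (· - n)).sum = (t.map (· - n)).sum) : s = t := by
  have hcard : ∀ n, Multiset.card (s.filter (n < ·)) = Multiset.card (t.filter (n < ·)) := by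
    intro n
    have h1 := aux_sum_sub n s
    have h2 := aux_sum_sub n t
    rw [h n, h (n+1)] at h1
    omega
  ext a
  cases a with
  | zero =>
    rw [Multiset.count_eq_zero_of_notMem, Multiset.count_eq_zero_of_notMem]
    · intro hmem; exact absurd (ht 0 hmem) (by omega)
    · intro hmem; exact absurd (hs 0 hmem) (by omega)
  | succ n =>
    have h1 := aux_card_filter_succ n s
    have h2 := aux_card_filter_succ n t
    have h3 := hcard n
    have h4 := hcard (n+1)
    omega

lemma aux_rank {K V : Type*} [Field K] [AddCommGroup V] [Module K V]
    [FiniteDimensional K V] (φ : Module.End K V) {m : ℕ} (k : Fin m → ℕ) (x : Fin m → V)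
    (hxzero : ∀ γ, (φ ^ (k γ)) (x γ) = 0)
    (b : Basis ((γ : Fin m) × Fin (k γ)) K V)
    (hb : ∀ p : (γ : Fin m) × Fin (k γ), b p = (φ ^ ((p.2 : ℕ))) (x p.1)) (n : ℕ) :
    Module.finrank K (LinearMap.range (φ ^ n)) = ∑ γ, (k γ - n) := by
  have comp : ∀ (a c : ℕ) (v : V), (φ ^ a) ((φ ^ c) v) = (φ ^ (a + c)) v := by
    intro a c v
    rw [pow_add]
    rfl
  have hzero : ∀ γ j, k γ ≤ j → (φ ^ j) (x γ) = 0 := by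
    intro γ j hj
    have h2 : (φ ^ j) (x γ) = (φ ^ (j - k γ)) ((φ ^ (k γ)) (x γ)) := by
      rw [comp, Nat.sub_add_cancel hj]
    rw [h2, hxzero, map_zero]
  set ι := {p : (γ : Fin m) × Fin (k γ) // n ≤ (p.2 : ℕ)} with hι
  set e : ι → V := fun p => b p.1 with he
  have hli : LinearIndependent K e := b.linearIndependent.comp _ Subtype.val_injective
  have hspan : Submodule.span K (Set.range e) = LinearMap.range (φ ^ n) := by
    rw [LinearMap.range_eq_map, ← b.span_eq, Submodule.map_span, ← Set.range_comp]
    apply le_antisymm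
    · rw [Submodule.span_le]
      rintro _ ⟨⟨⟨γ, i⟩, hni⟩, rfl⟩
      have hni' : n ≤ (i : ℕ) := hni
      have : e ⟨⟨γ, i⟩, hni⟩ = (φ ^ n) (b ⟨γ, ⟨(i : ℕ) - n, by omega⟩⟩) := by
        show b ⟨γ, i⟩ = _
        rw [hb, hb, comp]
        show (φ ^ ((i : ℕ))) (x γ) = (φ ^ (n + ((i : ℕ) - n))) (x γ)
        rw [Nat.add_sub_cancel' hni']
      rw [this]
      exact Submodule.subset_span ⟨⟨γ, ⟨(i : ℕ) - n, by omega⟩⟩, rfl⟩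
    · rw [Submodule.span_le]
      rintro _ ⟨⟨γ, i⟩, rfl⟩
      show (φ ^ n) (b ⟨γ, i⟩) ∈ Submodule.span K (Set.range e)
      rw [hb, comp]
      show (φ ^ (n + (i : ℕ))) (x γ) ∈ _
      by_cases h : n + (i : ℕ) < k γ
      · have : (φ ^ (n + (i : ℕ))) (x γ) = e ⟨⟨γ, ⟨n + (i : ℕ), h⟩⟩, by simp⟩ := by
          show _ = b ⟨γ, ⟨n + (i : ℕ), h⟩⟩
          rw [hb]
        rw [this]
        exact Submodule.subset_span (Set.mem_range_self _)
      · rw [hzero γ _ (by omega)]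
        exact zero_mem _
  rw [← hspan, finrank_span_eq_card hli]
  have hcard : Fintype.card ι = Fintype.card ((γ : Fin m) × Fin (k γ - n)) := by
    apply Fintype.card_congr
    refine ⟨fun p => ⟨p.1.1, ⟨(p.1.2 : ℕ) - n, ?_⟩⟩,
            fun q => ⟨⟨q.1, ⟨n + (q.2 : ℕ), by omega⟩⟩, by simp⟩, ?_, ?_⟩
    · have := p.1.2.isLt
      have := p.2
      omega
    · rintro ⟨⟨γ, i⟩, hni⟩
      simp only [hι] at hni
      apply Subtype.ext
      simp only
      congr 1
      simp [Fin.ext_iff]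
      omega
    · rintro ⟨γ, j⟩
      simp [Fin.ext_iff]
  rw [hcard, Fintype.card_sigma]
  simp

theorem stmt4 {K V : Type*} [Field K] [AddCommGroup V] [Module K V]
    [FiniteDimensional K V] (φ : Module.End K V) (hnil : IsNilpotent φ)
    {m m' : ℕ} (k : Fin m → ℕ) (l : Fin m' → ℕ)
    (hk1 : ∀ γ, 1 ≤ k γ) (hl1 : ∀ δ, 1 ≤ l δ)
    (x : Fin m → V) (y : Fin m' → V)
    (hxzero : ∀ γ, (φ ^ (k γ)) (x γ) = 0) (hyzero : ∀ δ, (φ ^ (l δ)) (y δ) = 0)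
    (b : Module.Basis ((γ : Fin m) × Fin (k γ)) K V)
    (hb : ∀ p : (γ : Fin m) × Fin (k γ), b p = (φ ^ ((p.2 : ℕ))) (x p.1))
    (c : Module.Basis ((δ : Fin m') × Fin (l δ)) K V)
    (hc : ∀ p : (δ : Fin m') × Fin (l δ), c p = (φ ^ ((p.2 : ℕ))) (y p.1)) :
    Multiset.map k Finset.univ.val = Multiset.map l Finset.univ.val := by
  have hr : ∀ n, ∑ γ, (k γ - n) = ∑ δ, (l δ - n) := by
    intro n
    rw [← aux_rank φ k x hxzero b hb n, ← aux_rank φ l y hyzero c hc n]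
  apply aux_ms
  · intro a ha
    obtain ⟨γ, _, rfl⟩ := Multiset.mem_map.mp ha
    exact hk1 γ
  · intro a ha
    obtain ⟨δ, _, rfl⟩ := Multiset.mem_map.mp ha
    exact hl1 δ
  · intro n
    rw [Multiset.map_map, Multiset.map_map]
    exact hr n
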